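/- Let G be a finite Frobenius group with kernel F and complement of order n ≥ 2. Then every element of G − F is a vanishing element of G, hence pv(G) ≥ (n−1)/n. -/

import Mathlib

open CategoryTheory

/-- An element `g` of a group is a *vanishing element* if some irreducible complex
character vanishes at `g`. -/
def IsVanishing {G : Type} [Group G] (g : G) : Prop :=
  ∃ V : FDRep ℂ G, Simple V ∧ V.character g = 0

/-- The proportion of vanishing elements of `G`. -/
noncomputable def pv (G : Type) [Group G] : ℝ :=
  (Set.ncard {g : G | IsVanishing g}) / (Nat.card G)

/-- The proportion of non-vanishing elements of `G`. -/
noncomputable def pnv (G : Type) [Group G] : ℝ :=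
  (Set.ncard {g : G | ¬ IsVanishing g}) / (Nat.card G)


/-- `G` is a Frobenius group with kernel `F`: `F` is a nontrivial proper normal subgroup
and the centralizer of every nonidentity element of `F` is contained in `F`. -/
def IsFrobeniusWithKernel (G : Type) [Group G] (F : Subgroup G) : Prop :=
  F.Normal ∧ F ≠ ⊥ ∧ F ≠ ⊤ ∧
    ∀ x ∈ F, x ≠ 1 → ∀ g : G, g * x = x * g → g ∈ F

/-- If a finite-dimensional representation over `ℂ` is nonzero and has no nontrivial invariant
subspaces, then the corresponding object of `FDRep` is simple. -/
lemma FrobAux.simple_of_irreducible {G : Type} [Group G] {V : Type} [AddCommGroup V] [Module ℂ V]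
    [FiniteDimensional ℂ V] (ρ : Representation ℂ G V) [Nontrivial V]
    (hirr : ∀ U : Submodule ℂ V, (∀ g : G, ∀ v ∈ U, ρ g v ∈ U) → U = ⊥ ∨ U = ⊤) :
    Simple (FDRep.of ρ) := by
  constructor
  intro Y f hm
  constructor
  · intro hiso h0
    have h1 : (𝟙 (FDRep.of ρ) : FDRep.of ρ ⟶ FDRep.of ρ) = inv f ≫ (0 : Y ⟶ FDRep.of ρ) := by
      rw [← h0, IsIso.inv_hom_id]
    rw [Limits.comp_zero] at h1
    obtain ⟨v, w, hvw⟩ := exists_pair_ne V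
    apply hvw
    have h2 : ∀ u : V, u = 0 := by
      intro u
      have h3 := congrArg Action.Hom.hom h1
      have h4 := congrFun (congrArg (fun (m : (FDRep.of ρ).V ⟶ (FDRep.of ρ).V) => (m : V → V)) h3) u
      exact h4.trans rfl
    rw [h2 v, h2 w]
  · intro hf
    set l : Y.V →ₗ[ℂ] V := f.hom.hom.hom with hl
    have hcomm : ∀ (g : G) (y : Y.V), l (Y.ρ g y) = ρ g (l y) := by
      intro g y
      have := f.comm g
      exact congrFun (congrArg (fun (m : Y.V ⟶ (FDRep.of ρ).V) => (m : Y.V → V)) this) y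
    have hrange : ∀ g : G, ∀ v ∈ LinearMap.range l, ρ g v ∈ LinearMap.range l := by
      rintro g v ⟨y, rfl⟩
      exact ⟨Y.ρ g y, hcomm g y⟩
    have hsurj : Function.Surjective l := by
      rcases hirr _ hrange with h | h
      · exact absurd (Action.Hom.ext (FGModuleCat.hom_ext (LinearMap.range_eq_bot.mp h : l = 0))) hf
      · rw [← LinearMap.range_eq_top]; exact h
    have hker : ∀ g : G, ∀ y ∈ LinearMap.ker l, Y.ρ g y ∈ LinearMap.ker l := by
      intro g y hy
      rw [LinearMap.mem_ker] at hy ⊢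
      exact (hcomm g y).trans (by rw [hy, map_zero])
    set K := LinearMap.ker l with hK
    let ρK : Representation ℂ G K :=
      { toFun := fun g => (Y.ρ g).restrict (hker g)
        map_one' := by ext k; simp [LinearMap.restrict_apply, Module.End.one_apply]
        map_mul' := by
          intro g h; ext k
          show (Y.ρ (g * h)) k.1 = ((Y.ρ g).restrict (hker g) ((Y.ρ h).restrict (hker h) k)).1
          rw [map_mul]; rfl }
    let ι : FDRep.of ρK ⟶ Y :=
      { hom := FGModuleCat.ofHom (K.subtype : ↥K →ₗ[ℂ] Y.V)
        comm := by intro g; ext k; rfl }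
    have hι0 : ι ≫ f = (0 : FDRep.of ρK ⟶ Y) ≫ f := by
      apply Action.Hom.ext
      apply FGModuleCat.hom_ext
      apply LinearMap.ext
      intro k
      show l (K.subtype k) = l ((0 : ↥K →ₗ[ℂ] Y.V) k)
      simp [LinearMap.mem_ker.mp k.2]
    have hι : ι = 0 := Mono.right_cancellation _ _ hι0
    have hinj : Function.Injective l := by
      rw [← LinearMap.ker_eq_bot]
      rw [eq_bot_iff]
      intro y hy
      have h5 := congrArg Action.Hom.hom hι
      have h6 := congrFun (congrArg (fun (m : (FDRep.of ρK).V ⟶ Y.V) => (m : ↥K → Y.V)) h5) ⟨y, hy⟩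
      rw [Submodule.mem_bot]; exact h6
    let e : Y.V ≃ₗ[ℂ] V := LinearEquiv.ofBijective l ⟨hinj, hsurj⟩
    let ginv : FDRep.of ρ ⟶ Y :=
      { hom := FGModuleCat.ofHom (e.symm : V →ₗ[ℂ] Y.V)
        comm := by
          intro g
          apply FGModuleCat.hom_ext
          apply LinearMap.ext
          intro v
          show e.symm (ρ g v) = Y.ρ g (e.symm v)
          apply hinj
          show l (e.symm (ρ g v)) = l (Y.ρ g (e.symm v))
          rw [hcomm]
          have h7 : ∀ v : V, l (e.symm v) = v := fun v => e.apply_symm_apply v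
          rw [h7, h7] }
    refine ⟨ginv, ?_, ?_⟩
    · apply Action.Hom.ext
      apply FGModuleCat.hom_ext
      apply LinearMap.ext
      intro y
      show e.symm (l y) = y
      exact e.symm_apply_apply y
    · apply Action.Hom.ext
      apply FGModuleCat.hom_ext
      apply LinearMap.ext
      intro v
      show l (e.symm v) = v
      exact e.apply_symm_apply v

set_option maxHeartbeats 1000000 in
set_option synthInstance.maxHeartbeats 400000 in
theorem stmt6 (G : Type) [Group G] [Finite G] (F : Subgroup G)
    (hF : IsFrobeniusWithKernel G F) (n : ℕ) (hn : F.index = n) (hn2 : 2 ≤ n) :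
    (∀ g : G, g ∉ F → IsVanishing g) ∧ pv G ≥ ((n : ℝ) - 1) / n := by
  classical
  obtain ⟨hnorm, hFbot, hFtop, hcent⟩ := hF
  haveI : Fintype G := Fintype.ofFinite G
  haveI : NeZero ((Fintype.card G : ℂ)) :=
    ⟨by exact_mod_cast (Fintype.card_ne_zero : Fintype.card G ≠ 0)⟩
  haveI : FiniteDimensional ℂ (MonoidAlgebra ℂ G) :=
    Module.Finite.of_basis (MonoidAlgebra.basis G ℂ)
  -- the F-invariants of the regular representation
  have AFsmul : ∀ (c : (MonoidAlgebra ℂ G)) (m : (MonoidAlgebra ℂ G)), (∀ x ∈ F, MonoidAlgebra.single x (1 : ℂ) * m = m) →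
      ∀ x ∈ F, MonoidAlgebra.single x (1 : ℂ) * (c • m) = c • m := by
    intro c
    induction c using MonoidAlgebra.induction_on with
    | of g =>
      intro m hm x hx
      have hconj : g⁻¹ * x * g ∈ F := by
        have := hnorm.conj_mem x hx g⁻¹
        simpa [mul_assoc] using this
      have h1 : MonoidAlgebra.single x (1 : ℂ) * MonoidAlgebra.of ℂ G g
          = MonoidAlgebra.of ℂ G g * MonoidAlgebra.single (g⁻¹ * x * g) (1 : ℂ) := by
        simp only [MonoidAlgebra.of_apply, MonoidAlgebra.single_mul_single, one_mul, mul_one]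
        congr 1
        group
      have : (MonoidAlgebra.of ℂ G g : (MonoidAlgebra ℂ G)) • m = MonoidAlgebra.of ℂ G g * m := rfl
      rw [this, ← mul_assoc, h1, mul_assoc, hm _ hconj]
    | add f g hf hg =>
      intro m hm x hx
      have h1 : (f + g) • m = f • m + g • m := add_smul f g m
      rw [h1, mul_add, hf m hm x hx, hg m hm x hx]
    | smul r f hf =>
      intro m hm x hx
      have h1 : (r • f) • m = r • (f • m) := smul_assoc r f m
      rw [h1, Algebra.mul_smul_comm, hf m hm x hx]
  let AF : Submodule (MonoidAlgebra ℂ G) (MonoidAlgebra ℂ G) :=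
    { carrier := {m | ∀ x ∈ F, MonoidAlgebra.single x (1 : ℂ) * m = m}
      add_mem' := by intro a b ha hb x hx; rw [mul_add, ha x hx, hb x hx]
      zero_mem' := by intro x hx; rw [mul_zero]
      smul_mem' := fun c m hm => AFsmul c m hm }
  have hAFne : AF ≠ ⊤ := by
    obtain ⟨a, ha⟩ := Subgroup.ne_bot_iff_exists_ne_one.mp hFbot
    set x : G := (a : G) with hxdef
    have hxF : x ∈ F := a.2
    have hx1 : x ≠ 1 := fun h => ha (Subtype.ext h)
    intro h
    have h1 : (1 : (MonoidAlgebra ℂ G)) ∈ AF := h ▸ Submodule.mem_top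
    have h2 := h1 x hxF
    rw [mul_one] at h2
    have h3 : (MonoidAlgebra.single x (1 : ℂ)).coeff x = (1 : (MonoidAlgebra ℂ G)).coeff x := by rw [h2]
    rw [MonoidAlgebra.coeff_single, Finsupp.single_eq_same] at h3
    have h4 : (1 : (MonoidAlgebra ℂ G)).coeff x = 0 := by
      show (Finsupp.single (1 : G) (1 : ℂ)) x = 0
      rw [Finsupp.single_eq_of_ne (by exact fun hh => hx1 hh)]
    rw [h4] at h3
    exact one_ne_zero h3
  obtain ⟨C, hC⟩ := MonoidAlgebra.Submodule.exists_isCompl AF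
  have hCne : C ≠ ⊥ := by
    intro h
    apply hAFne
    have := hC.sup_eq_top
    rw [h, sup_bot_eq] at this
    exact this
  haveI : Nontrivial ↥C := Submodule.nontrivial_iff_ne_bot.mpr hCne
  -- a simple submodule inside C
  obtain ⟨S, hSC, hSsimple⟩ := (IsSemisimpleModule.eq_bot_or_exists_simple_le C).resolve_left hCne
  haveI : IsSimpleModule (MonoidAlgebra ℂ G) ↥S := hSsimple
  haveI : Nontrivial ↥S := IsSimpleModule.nontrivial (MonoidAlgebra ℂ G) ↥S
  -- the representation of G on S
  have hSinv : ∀ g : G, ∀ m ∈ S, MonoidAlgebra.single g (1 : ℂ) * m ∈ S := by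
    intro g m hm
    have : MonoidAlgebra.single g (1 : ℂ) * m = (MonoidAlgebra.single g (1 : ℂ) : (MonoidAlgebra ℂ G)) • m :=
      rfl
    rw [this]
    exact S.smul_mem _ hm
  letI : Module ℂ ↥S := inferInstance
  let ρSfun : G → (↥S →ₗ[ℂ] ↥S) := fun g =>
    { toFun := fun s => ⟨MonoidAlgebra.single g (1 : ℂ) * s.1, hSinv g s.1 s.2⟩
      map_add' := by intro a b; apply Subtype.ext; show _ = _; simp [mul_add]
      map_smul' := by
        intro c a; apply Subtype.ext
        show MonoidAlgebra.single g (1 : ℂ) * (c • (a : (MonoidAlgebra ℂ G))) = c • (MonoidAlgebra.single g 1 * a.1)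
        rw [Algebra.mul_smul_comm] }
  let ρS : Representation ℂ G ↥S :=
    { toFun := ρSfun
      map_one' := by
        refine LinearMap.ext fun s => Subtype.ext ?_
        show MonoidAlgebra.single (1 : G) (1 : ℂ) * s.1 = s.1
        rw [← MonoidAlgebra.one_def, one_mul]
      map_mul' := by
        intro g h
        refine LinearMap.ext fun s => Subtype.ext ?_
        show MonoidAlgebra.single (g * h) (1 : ℂ) * s.1
          = MonoidAlgebra.single g (1 : ℂ) * (MonoidAlgebra.single h (1 : ℂ) * s.1)
        rw [← mul_assoc, MonoidAlgebra.single_mul_single, mul_one] }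
  have hρS : ∀ (g : G) (s : ↥S), (ρS g s : (MonoidAlgebra ℂ G)) = MonoidAlgebra.single g (1 : ℂ) * s.1 :=
    fun g s => rfl
  haveI : FiniteDimensional ℂ ↥S := by
    let lemb : ↥S →ₗ[ℂ] (MonoidAlgebra ℂ G) :=
      { toFun := fun s => s.1
        map_add' := fun a b => rfl
        map_smul' := fun c a => rfl }
    exact FiniteDimensional.of_injective lemb Subtype.val_injective
  -- irreducibility at the level of ℂ-subspaces
  have hirr : ∀ U : Submodule ℂ ↥S, (∀ g : G, ∀ v ∈ U, ρS g v ∈ U) → U = ⊥ ∨ U = ⊤ := by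
    intro U hU
    have hUsmul : ∀ (c : (MonoidAlgebra ℂ G)) (u : ↥S), u ∈ U → c • u ∈ U := by
      intro c
      induction c using MonoidAlgebra.induction_on with
      | of g =>
        intro u hu
        have : (MonoidAlgebra.of ℂ G g : (MonoidAlgebra ℂ G)) • u = ρS g u := by
          apply Subtype.ext
          rfl
        rw [this]
        exact hU g u hu
      | add f g hf hg =>
        intro u hu
        rw [add_smul]
        exact U.add_mem (hf u hu) (hg u hu)
      | smul r f hf =>
        intro u hu
        rw [smul_assoc]
        exact U.smul_mem r (hf u hu)
    let U' : Submodule (MonoidAlgebra ℂ G) ↥S :=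
      { carrier := (U : Set ↥S)
        add_mem' := fun ha hb => U.add_mem ha hb
        zero_mem' := U.zero_mem
        smul_mem' := fun c u hu => hUsmul c u hu }
    rcases eq_bot_or_eq_top U' with h | h
    · left
      rw [eq_bot_iff]
      intro u hu
      have : u ∈ U' := hu
      rw [h] at this
      simpa using this
    · right
      rw [eq_top_iff]
      intro u _
      have : u ∈ U' := h ▸ Submodule.mem_top
      exact this
  -- no nonzero F-invariant vectors in S
  have hnoinv : ∀ s : ↥S, (∀ x : ↥F, ρS (x : G) s = s) → s = 0 := by
    intro s hs
    have h1 : (s : (MonoidAlgebra ℂ G)) ∈ AF := by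
      intro x hx
      have := congrArg Subtype.val (hs ⟨x, hx⟩)
      exact this
    have h2 : (s : (MonoidAlgebra ℂ G)) ∈ C := hSC s.2
    have h3 : (s : (MonoidAlgebra ℂ G)) ∈ AF ⊓ C := ⟨h1, h2⟩
    rw [hC.inf_eq_bot] at h3
    exact Subtype.ext h3
  haveI : Nontrivial ↥S := IsSimpleModule.nontrivial (MonoidAlgebra ℂ G) ↥S
  have hsimple : Simple (FDRep.of ρS) := FrobAux.simple_of_irreducible ρS hirr
  haveI : Fintype ↥F := Fintype.ofFinite ↥F
  -- the key vanishing claim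
  have key : ∀ g : G, g ∉ F → IsVanishing g := by
    intro g hg
    refine ⟨FDRep.of ρS, hsimple, ?_⟩
    set χ : G → ℂ := (FDRep.of ρS).character with hχ
    -- the sum of χ over the coset g • F equals |F| • χ g
    have hφmem : ∀ y : ↥F, g⁻¹ * (y : G) * g * (y : G)⁻¹ ∈ F := by
      intro y
      have h1 : g⁻¹ * (y : G) * g ∈ F := by
        have := hnorm.conj_mem (y : G) y.2 g⁻¹
        simpa [mul_assoc] using this
      exact F.mul_mem h1 (F.inv_mem y.2)
    set φ : ↥F → ↥F := fun y => ⟨g⁻¹ * (y : G) * g * (y : G)⁻¹, hφmem y⟩ with hφ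
    have hφinj : Function.Injective φ := by
      intro y₁ y₂ h
      have h1 : g⁻¹ * (y₁ : G) * g * (y₁ : G)⁻¹ = g⁻¹ * (y₂ : G) * g * (y₂ : G)⁻¹ :=
        congrArg Subtype.val h
      have h2 : g * ((y₂ : G)⁻¹ * (y₁ : G)) = ((y₂ : G)⁻¹ * (y₁ : G)) * g := by
        have h3 : (y₁ : G) * g * (y₁ : G)⁻¹ = (y₂ : G) * g * (y₂ : G)⁻¹ := by
          have := congrArg (fun z => g * z) h1
          simpa [mul_assoc] using this
        have h4 := congrArg (fun z => (y₂ : G)⁻¹ * z * (y₁ : G)) h3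
        exact (by simpa [mul_assoc] using h4.symm)
      by_cases hw : (y₂ : G)⁻¹ * (y₁ : G) = 1
      · exact Subtype.ext (inv_mul_eq_one.mp hw).symm
      · exfalso
        exact hg (hcent ((y₂ : G)⁻¹ * (y₁ : G)) (F.mul_mem (F.inv_mem y₂.2) y₁.2) hw g h2)
    have hφbij : Function.Bijective φ := Finite.injective_iff_bijective.mp hφinj
    have hsum1 : ∑ y : ↥F, χ (g * ((φ y : ↥F) : G)) = ∑ f : ↥F, χ (g * (f : G)) :=
      Fintype.sum_bijective φ hφbij _ _ (fun y => rfl)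
    have hsum2 : ∀ y : ↥F, χ (g * ((φ y : ↥F) : G)) = χ g := by
      intro y
      have h1 : g * (g⁻¹ * (y : G) * g * (y : G)⁻¹) = (y : G) * g * ((y : G))⁻¹ := by
        group
      show χ (g * (g⁻¹ * (y : G) * g * (y : G)⁻¹)) = χ g
      rw [h1]
      exact FDRep.char_conj _ g (y : G)
    have hcoset : ∑ f : ↥F, χ (g * (f : G)) = (Fintype.card ↥F : ℂ) * χ g := by
      rw [← hsum1]
      rw [Finset.sum_congr rfl (fun y _ => hsum2 y)]
      rw [Finset.sum_const, Finset.card_univ, nsmul_eq_mul]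
    -- the sum of χ over the coset g • F is zero
    set ρF : Representation ℂ ↥F ↥S := ρS.comp F.subtype with hρF
    have hinvbot : Representation.invariants ρF = ⊥ := by
      rw [eq_bot_iff]
      intro s hs
      rw [Representation.mem_invariants] at hs
      exact hnoinv s hs
    have hsumrep : (∑ f : ↥F, ρF f) = 0 := by
      apply LinearMap.ext
      intro v
      have h0 : (∑ f : ↥F, ρF f) v ∈ Representation.invariants ρF := by
        rw [Representation.mem_invariants]
        intro x
        have h1 : ∀ f : ↥F, ρF x (ρF f v) = ρF (x * f) v := by
          intro f; rw [map_mul]; rfl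
        calc ρF x ((∑ f : ↥F, ρF f) v)
            = ∑ f : ↥F, ρF x (ρF f v) := by rw [LinearMap.sum_apply, map_sum]
          _ = ∑ f : ↥F, ρF (x * f) v := Finset.sum_congr rfl (fun f _ => h1 f)
          _ = ∑ f : ↥F, ρF f v := Fintype.sum_equiv (Equiv.mulLeft x)
                (fun f => ρF (x * f) v) (fun f => ρF f v) (fun f => by rw [Equiv.coe_mulLeft])
          _ = (∑ f : ↥F, ρF f) v := (LinearMap.sum_apply _ _ _).symm
      rw [hinvbot] at h0
      simpa using h0
    have hzero : ∑ f : ↥F, χ (g * (f : G)) = 0 := by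
      have h1 : ∀ f : ↥F, χ (g * (f : G)) = LinearMap.trace ℂ ↥S (ρS g * ρF f) := by
        intro f
        show LinearMap.trace ℂ ↥S (ρS (g * (f : G))) = _
        rw [map_mul ρS]
        rfl
      rw [Finset.sum_congr rfl (fun f _ => h1 f)]
      rw [← map_sum, ← Finset.mul_sum, hsumrep, mul_zero, map_zero]
    -- conclude
    have hfinal : (Fintype.card ↥F : ℂ) * χ g = 0 := by rw [← hcoset, hzero]
    have hcard : (Fintype.card ↥F : ℂ) ≠ 0 := by
      exact_mod_cast (Fintype.card_ne_zero : Fintype.card ↥F ≠ 0)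
    exact (mul_eq_zero.mp hfinal).resolve_left hcard
  refine ⟨key, ?_⟩
  -- counting
  have hsub : ((F : Set G))ᶜ ⊆ {g : G | IsVanishing g} := by
    intro g hg
    exact key g hg
  have hncard : ((F : Set G))ᶜ.ncard ≤ {g : G | IsVanishing g}.ncard :=
    Set.ncard_le_ncard hsub (Set.toFinite _)
  have hcompl : ((F : Set G)).ncard + ((F : Set G))ᶜ.ncard = Nat.card G :=
    Set.ncard_add_ncard_compl _
  have hFcard : ((F : Set G)).ncard = Nat.card ↥F := (Nat.card_coe_set_eq _).symm
  have hGF : Nat.card ↥F * n = Nat.card G := by rw [← hn]; exact Subgroup.card_mul_index F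
  have hcardGpos : 0 < Nat.card G := Nat.card_pos
  have hcardFpos : 0 < Nat.card ↥F := Nat.card_pos
  have hnpos : 0 < n := lt_of_lt_of_le (by norm_num) hn2
  have hcG : (Nat.card G : ℝ) = (Nat.card ↥F : ℝ) * n := by exact_mod_cast hGF.symm
  have hcGpos : (0:ℝ) < Nat.card G := by exact_mod_cast hcardGpos
  have hcFpos : (0:ℝ) < Nat.card ↥F := by exact_mod_cast hcardFpos
  have hnposR : (0:ℝ) < n := by exact_mod_cast hnpos
  have hcomplR : ((((F : Set G))ᶜ.ncard : ℝ)) = (Nat.card G : ℝ) - Nat.card ↥F := by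
    have h2 : ((F : Set G)).ncard + ((F : Set G))ᶜ.ncard = Nat.card G := hcompl
    rw [hFcard] at h2
    have h3 : ((Nat.card ↥F : ℝ)) + ((F : Set G))ᶜ.ncard = Nat.card G := by exact_mod_cast h2
    linarith
  have hvanR : ((Nat.card G : ℝ) - Nat.card ↥F) ≤ ({g : G | IsVanishing g}.ncard : ℝ) := by
    rw [← hcomplR]; exact_mod_cast hncard
  rw [ge_iff_le, pv, div_le_div_iff₀ hnposR hcGpos]
  calc ((n : ℝ) - 1) * (Nat.card G) = ((Nat.card G : ℝ) - Nat.card ↥F) * n := by rw [hcG]; ring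
    _ ≤ ({g : G | IsVanishing g}.ncard : ℝ) * n :=
        mul_le_mul_of_nonneg_right hvanR (le_of_lt hnposR)
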